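/- arXiv:2310.03389 — 5 statements merged into one kernel-verified Lean document; each statement's English description precedes it below -/
import Mathlib

section
/- Let $(a_{jk})_{j,k\in\mathbb{Z}}$ be a real (or complex) matrix defining a bounded linear operator $A:\ell^\infty(\mathbb{Z})\to\ell^1(\mathbb{Z})$ with norm $C$, i.e. $\sum_j |\sum_k a_{jk}\zeta_k| \le C \sup_k|\zeta_k|$ for all bounded sequences $\zeta$. Then for every $m\in\mathbb{Z}$ the sum along the $m$-th diagonal satisfies $\sum_{j-k=m} |a_{jk}| \le C$. -/
def zeta (S : Finset ℤ) (ε : {x // x ∈ S} → Bool) : ℤ → ℝ :=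
  fun k => if h : k ∈ S then (if ε ⟨k, h⟩ then 1 else -1) else 0

lemma zeta_abs_le (S : Finset ℤ) (ε : {x // x ∈ S} → Bool) (k : ℤ) :
    |zeta S ε k| ≤ 1 := by
  unfold zeta
  split
  · split <;> norm_num
  · norm_num

lemma zeta_zero (S : Finset ℤ) (ε : {x // x ∈ S} → Bool) (k : ℤ) (hk : k ∉ S) :
    zeta S ε k = 0 := by
  simp [zeta, hk]

lemma avg_key (S : Finset ℤ) (d : ℤ → ℝ) (k0 : ℤ) (h : k0 ∈ S) :
    (2:ℝ) ^ S.card * |d k0| ≤ ∑ ε : ({x // x ∈ S} → Bool), |∑ k ∈ S, d k * zeta S ε k| := by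
  classical
  set F : ({x // x ∈ S} → Bool) → ℝ := fun ε => ∑ k ∈ S, d k * zeta S ε k with hF
  set k0' : {x // x ∈ S} := ⟨k0, h⟩ with hk0'
  set flip : ({x // x ∈ S} → Bool) → ({x // x ∈ S} → Bool) :=
    fun ε => Function.update ε k0' (!(ε k0')) with hflip
  have hinv : Function.Involutive flip := by
    intro ε
    funext x
    by_cases hx : x = k0'
    · subst hx; simp [hflip, Function.update]
    · simp [hflip, Function.update_of_ne hx]
  have hdiff : ∀ ε, |F ε - F (flip ε)| = 2 * |d k0| := by
    intro ε
    have heq : F ε - F (flip ε) = ∑ k ∈ S, (d k * zeta S ε k - d k * zeta S (flip ε) k) := by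
      rw [Finset.sum_sub_distrib]
    rw [heq, Finset.sum_eq_single k0]
    · have hz1 : zeta S ε k0 = (if ε k0' then 1 else -1) := by simp [zeta, h, hk0']
      have hz2 : zeta S (flip ε) k0 = (if ε k0' then -1 else 1) := by
        simp only [zeta, dif_pos h]
        have hfe : (flip ε) ⟨k0, h⟩ = !(ε k0') := by simp [hflip, hk0', Function.update]
        rw [hfe]
        cases hc : ε k0' <;> simp
      rw [hz1, hz2]
      cases hc : ε k0'
      · simp [hc]
        rw [show -d k0 - d k0 = -(2 * d k0) by ring, abs_neg, abs_mul, abs_two]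
      · simp [hc]
        rw [show d k0 + d k0 = 2 * d k0 by ring, abs_mul, abs_two]
    · intro k hk hne
      have hfe : zeta S (flip ε) k = zeta S ε k := by
        simp only [zeta, dif_pos hk]
        have : (flip ε) ⟨k, hk⟩ = ε ⟨k, hk⟩ := by
          apply Function.update_of_ne
          simp [hk0', Subtype.ext_iff, hne]
        rw [this]
      rw [hfe]; ring
    · intro hk0; exact absurd h hk0
  have hsum_flip : ∑ ε : ({x // x ∈ S} → Bool), |F (flip ε)|
      = ∑ ε : ({x // x ∈ S} → Bool), |F ε| :=
    Fintype.sum_bijective flip hinv.bijective _ _ (fun ε => rfl)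
  have hlow : ∀ ε, 2 * |d k0| ≤ |F ε| + |F (flip ε)| := by
    intro ε
    rw [← hdiff ε, sub_eq_add_neg]
    exact (abs_add_le _ _).trans (by rw [abs_neg])
  have hcard : (Fintype.card ({x // x ∈ S} → Bool) : ℝ) = 2 ^ S.card := by
    rw [Fintype.card_fun]
    simp
  have hsum : ∑ ε : ({x // x ∈ S} → Bool), (2 * |d k0|)
      ≤ ∑ ε : ({x // x ∈ S} → Bool), (|F ε| + |F (flip ε)|) :=
    Finset.sum_le_sum (fun ε _ => hlow ε)
  rw [Finset.sum_const, Finset.card_univ, nsmul_eq_mul, hcard, Finset.sum_add_distrib,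
    hsum_flip] at hsum
  linarith

/-- If the matrix `(a j k)` defines a bounded operator
`ℓ∞(ℤ) → ℓ¹(ℤ)` with norm `C`, then each diagonal sum `∑_{j-k=m} |a j k|` is `≤ C`. -/
theorem stmt_0 (a : ℤ → ℤ → ℝ) (C : ℝ)
    (hbd : ∀ (ζ : ℤ → ℝ) (M : ℝ), (∀ k, |ζ k| ≤ M) →
      (∀ j, Summable fun k => a j k * ζ k) ∧
      Summable (fun j => |∑' k, a j k * ζ k|) ∧
      ∑' j, |∑' k, a j k * ζ k| ≤ C * M) :
    ∀ m : ℤ, Summable (fun k => |a (k + m) k|) ∧ ∑' k : ℤ, |a (k + m) k| ≤ C := by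
  intro m
  have key : ∀ S : Finset ℤ, ∑ k ∈ S, |a (k + m) k| ≤ C := by
    intro S
    classical
    set T : Finset ℤ := S.image (· + m) with hT
    have himg : ∑ k ∈ S, |a (k + m) k| = ∑ j ∈ T, |a j (j - m)| := by
      rw [hT, Finset.sum_image (fun x _ y _ h => by exact add_right_cancel h)]
      apply Finset.sum_congr rfl
      intro k _
      have hkk : k + m - m = k := by omega
      rw [hkk]
    -- per ε bound
    have hper : ∀ ε : ({x // x ∈ S} → Bool),
        ∑ j ∈ T, |∑ k ∈ S, a j k * zeta S ε k| ≤ C := by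
      intro ε
      obtain ⟨hs1, hs2, hs3⟩ := hbd (zeta S ε) 1 (zeta_abs_le S ε)
      have htsum : ∀ j, (∑' k, a j k * zeta S ε k) = ∑ k ∈ S, a j k * zeta S ε k := by
        intro j
        apply tsum_eq_sum
        intro k hk
        rw [zeta_zero S ε k hk, mul_zero]
      calc ∑ j ∈ T, |∑ k ∈ S, a j k * zeta S ε k|
          = ∑ j ∈ T, |∑' k, a j k * zeta S ε k| := by
            apply Finset.sum_congr rfl; intro j _; rw [htsum j]
        _ ≤ ∑' j, |∑' k, a j k * zeta S ε k| :=
            Summable.sum_le_tsum T (fun j _ => abs_nonneg _) hs2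
        _ ≤ C * 1 := hs3
        _ = C := mul_one C
    have h2n : (0:ℝ) < 2 ^ S.card := by positivity
    rw [himg]
    rw [← mul_le_mul_iff_right₀ h2n]
    calc (2:ℝ) ^ S.card * ∑ j ∈ T, |a j (j - m)|
        = ∑ j ∈ T, (2:ℝ) ^ S.card * |a j (j - m)| := Finset.mul_sum _ _ _
      _ ≤ ∑ j ∈ T, ∑ ε : ({x // x ∈ S} → Bool), |∑ k ∈ S, a j k * zeta S ε k| := by
          apply Finset.sum_le_sum
          intro j hj
          apply avg_key
          rw [hT] at hj
          obtain ⟨k, hk, rfl⟩ := Finset.mem_image.mp hj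
          simpa using hk
      _ = ∑ ε : ({x // x ∈ S} → Bool), ∑ j ∈ T, |∑ k ∈ S, a j k * zeta S ε k| :=
          Finset.sum_comm
      _ ≤ ∑ ε : ({x // x ∈ S} → Bool), C := Finset.sum_le_sum (fun ε _ => hper ε)
      _ = (2:ℝ) ^ S.card * C := by
          rw [Finset.sum_const, Finset.card_univ, nsmul_eq_mul, Fintype.card_fun]
          simp
  have hsummable : Summable (fun k => |a (k + m) k|) :=
    summable_of_sum_le (fun k => abs_nonneg _) key
  exact ⟨hsummable, Summable.tsum_le_of_sum_le hsummable key⟩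
end

section
/- Let $\rho:(0,\infty)\to(0,\infty)$ and $\rho'(t)=t/\rho(t)$. Suppose $\rho$ is increasing, $\rho'$ is increasing (i.e. $\rho$ is quasi-concave style), and both $\rho$ and $\rho'$ have range all of $(0,\infty)$. Then there exists an increasing sequence $(\tau_k)_{k\in\mathbb{Z}}$ of positive reals with $\tau_0=1$ such that $\min(1,\tau_j/\tau_k)\cdot\rho(\tau_k)/\rho(\tau_j) \le 2^{-|j-k|}$ for all $j,k\in\mathbb{Z}$. -/
/-- existence of the Janson sequence `τ` with geometric decay of
`min(1, τⱼ/τₖ) · ρ(τₖ)/ρ(τⱼ)`. -/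
theorem stmt_1 (ρ : ℝ → ℝ) (hpos : ∀ t > 0, 0 < ρ t)
    (hmono : MonotoneOn ρ (Set.Ioi (0 : ℝ)))
    (hmono' : MonotoneOn (fun t => t / ρ t) (Set.Ioi (0 : ℝ)))
    (hsurj : ∀ y > 0, ∃ t > 0, ρ t = y)
    (hsurj' : ∀ y > 0, ∃ t > 0, t / ρ t = y) :
    ∃ τ : ℤ → ℝ, StrictMono τ ∧ (∀ k, 0 < τ k) ∧ τ 0 = 1 ∧
      ∀ j k : ℤ, min 1 (τ j / τ k) * (ρ (τ k) / ρ (τ j)) ≤ (2 : ℝ) ^ (-|j - k|) := by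
  set ρ' : ℝ → ℝ := fun t => t / ρ t with hρ'def
  have hpos' : ∀ t > 0, 0 < ρ' t := fun t ht => div_pos ht (hpos t ht)
  -- forward map
  have Hf : ∀ t : ℝ, ∃ s, 0 < t → (0 < s ∧ 2 * ρ t ≤ ρ s ∧ 2 * ρ' t ≤ ρ' s) := by
    intro t
    by_cases ht : 0 < t
    · obtain ⟨t1, ht1, h1⟩ := hsurj (2 * ρ t) (mul_pos two_pos (hpos t ht))
      obtain ⟨t2, ht2, h2⟩ := hsurj' (2 * ρ' t) (mul_pos two_pos (hpos' t ht))
      refine ⟨max t1 t2, fun _ => ⟨lt_max_of_lt_left ht1, ?_, ?_⟩⟩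
      · rw [← h1]
        exact hmono (Set.mem_Ioi.mpr ht1) (Set.mem_Ioi.mpr (lt_max_of_lt_left ht1))
          (le_max_left _ _)
      · rw [← h2]
        exact hmono' (Set.mem_Ioi.mpr ht2) (Set.mem_Ioi.mpr (lt_max_of_lt_left ht1))
          (le_max_right _ _)
    · exact ⟨0, fun h => absurd h ht⟩
  -- backward map
  have Hg : ∀ t : ℝ, ∃ s, 0 < t → (0 < s ∧ 2 * ρ s ≤ ρ t ∧ 2 * ρ' s ≤ ρ' t) := by
    intro t
    by_cases ht : 0 < t
    · obtain ⟨t1, ht1, h1⟩ := hsurj (ρ t / 2) (by have := hpos t ht; positivity)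
      obtain ⟨t2, ht2, h2⟩ := hsurj' (ρ' t / 2) (by have := hpos' t ht; positivity)
      refine ⟨min t1 t2, fun _ => ⟨lt_min ht1 ht2, ?_, ?_⟩⟩
      · have : ρ (min t1 t2) ≤ ρ t1 :=
          hmono (Set.mem_Ioi.mpr (lt_min ht1 ht2)) (Set.mem_Ioi.mpr ht1) (min_le_left _ _)
        rw [h1] at this; linarith
      · have : ρ' (min t1 t2) ≤ ρ' t2 :=
          hmono' (Set.mem_Ioi.mpr (lt_min ht1 ht2)) (Set.mem_Ioi.mpr ht2) (min_le_right _ _)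
        have h2' : ρ' t2 = ρ' t / 2 := h2
        rw [h2'] at this; linarith
    · exact ⟨0, fun h => absurd h ht⟩
  choose f hf using Hf
  choose g hg using Hg
  set τ : ℤ → ℝ := fun n => if 0 ≤ n then f^[n.toNat] 1 else g^[(-n).toNat] 1 with hτdef
  have hfpos : ∀ m : ℕ, 0 < f^[m] 1 := by
    intro m; induction m with
    | zero => simp
    | succ m ih => rw [Function.iterate_succ_apply']; exact (hf _ ih).1
  have hgpos : ∀ m : ℕ, 0 < g^[m] 1 := by
    intro m; induction m with
    | zero => simp
    | succ m ih => rw [Function.iterate_succ_apply']; exact (hg _ ih).1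
  have hτpos : ∀ n : ℤ, 0 < τ n := by
    intro n
    by_cases hn : 0 ≤ n
    · simp only [hτdef, hn, if_pos]; exact hfpos _
    · simp only [hτdef, hn, if_neg, if_false]; exact hgpos _
  have hτ0 : τ 0 = 1 := by simp [hτdef]
  have hstep : ∀ n : ℤ, 2 * ρ (τ n) ≤ ρ (τ (n + 1)) ∧ 2 * ρ' (τ n) ≤ ρ' (τ (n + 1)) := by
    intro n
    by_cases hn : 0 ≤ n
    · have h1 : τ n = f^[n.toNat] 1 := by simp [hτdef, hn]
      have h2 : τ (n + 1) = f^[n.toNat + 1] 1 := by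
        have : 0 ≤ n + 1 := by omega
        have ht : (n + 1).toNat = n.toNat + 1 := by omega
        simp [hτdef, this, ht]
      rw [h1, h2, Function.iterate_succ_apply']
      exact ⟨(hf _ (hfpos _)).2.1, (hf _ (hfpos _)).2.2⟩
    · have h2 : τ (n + 1) = g^[(-(n + 1)).toNat] 1 := by
        by_cases hn1 : 0 ≤ n + 1
        · have h0 : n + 1 = 0 := by omega
          simp [hτdef, h0]
        · simp [hτdef, hn1]
      have h1 : τ n = g (τ (n + 1)) := by
        have ht : (-n).toNat = (-(n + 1)).toNat + 1 := by omega
        have hτn : τ n = g^[(-n).toNat] 1 := by simp [hτdef, hn]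
        rw [hτn, ht, Function.iterate_succ_apply', ← h2]
      rw [h1]
      have hp : 0 < τ (n + 1) := hτpos _
      exact ⟨(hg _ hp).2.1, (hg _ hp).2.2⟩
  have hlt : ∀ n : ℤ, τ n < τ (n + 1) := by
    intro n
    have h2 := (hstep n).2
    have hp := hpos' _ (hτpos n)
    have hlt' : ρ' (τ n) < ρ' (τ (n + 1)) := by linarith
    by_contra h
    push_neg at h
    have := hmono' (Set.mem_Ioi.mpr (hτpos (n + 1))) (Set.mem_Ioi.mpr (hτpos n)) h
    linarith
  have hsm : StrictMono τ := strictMono_int_of_lt_succ hlt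
  -- chains
  have hchainN : ∀ (d : ℕ) (k : ℤ), (2 : ℝ) ^ d * ρ (τ k) ≤ ρ (τ (k + d)) ∧
      (2 : ℝ) ^ d * ρ' (τ k) ≤ ρ' (τ (k + d)) := by
    intro d
    induction d with
    | zero => intro k; simp
    | succ d ih =>
      intro k
      have he : k + ((d : ℤ) + 1) = (k + d) + 1 := by ring
      obtain ⟨ih1, ih2⟩ := ih k
      obtain ⟨hs1, hs2⟩ := hstep (k + d)
      have hp1 := hpos _ (hτpos k)
      have hp2 := hpos' _ (hτpos k)
      have h2d := pow_pos (by norm_num : (0:ℝ) < 2) d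
      push_cast [he]
      rw [pow_succ]
      constructor <;> nlinarith
  have hchain : ∀ k n : ℤ, k ≤ n → (2 : ℝ) ^ (n - k).toNat * ρ (τ k) ≤ ρ (τ n) := by
    intro k n hn
    have he : n = k + ((n - k).toNat : ℤ) := by omega
    rw [show τ n = τ (k + ((n - k).toNat : ℤ)) from by rw [← he]]
    exact (hchainN (n - k).toNat k).1
  have hchain' : ∀ k n : ℤ, k ≤ n → (2 : ℝ) ^ (n - k).toNat * ρ' (τ k) ≤ ρ' (τ n) := by
    intro k n hn
    have he : n = k + ((n - k).toNat : ℤ) := by omega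
    rw [show τ n = τ (k + ((n - k).toNat : ℤ)) from by rw [← he]]
    exact (hchainN (n - k).toNat k).2
  refine ⟨τ, hsm, hτpos, hτ0, ?_⟩
  intro j k
  rcases le_total k j with h | h
  · -- j ≥ k
    set m : ℕ := (j - k).toNat with hm
    have habs : -|j - k| = -(m : ℤ) := by
      rw [abs_of_nonneg (sub_nonneg.mpr h)]; omega
    rw [habs, zpow_neg, zpow_natCast]
    have hc := hchain k j h
    have hρj := hpos _ (hτpos j)
    have hρk := hpos _ (hτpos k)
    have h2m : (0:ℝ) < 2 ^ m := by positivity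
    rw [← hm] at hc
    have hdiv : ρ (τ k) / ρ (τ j) ≤ (2 ^ m)⁻¹ := by
      rw [div_le_iff₀ hρj, inv_mul_eq_div, le_div_iff₀ h2m]
      linarith
    calc min 1 (τ j / τ k) * (ρ (τ k) / ρ (τ j))
        ≤ 1 * (ρ (τ k) / ρ (τ j)) :=
          mul_le_mul_of_nonneg_right (min_le_left _ _) (by positivity)
      _ = ρ (τ k) / ρ (τ j) := one_mul _
      _ ≤ (2 ^ m)⁻¹ := hdiv
  · -- j ≤ k
    set m : ℕ := (k - j).toNat with hm
    have habs : -|j - k| = -(m : ℤ) := by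
      rw [abs_of_nonpos (sub_nonpos.mpr h)]; omega
    rw [habs, zpow_neg, zpow_natCast]
    have hc := hchain' j k h
    have hρj := hpos _ (hτpos j)
    have hρk := hpos _ (hτpos k)
    have hτj := hτpos j
    have hτk := hτpos k
    have hρ'j := hpos' _ hτj
    have hρ'k := hpos' _ hτk
    have h2m : (0:ℝ) < 2 ^ m := by positivity
    rw [← hm] at hc
    have hdiv : ρ' (τ j) / ρ' (τ k) ≤ (2 ^ m)⁻¹ := by
      rw [div_le_iff₀ hρ'k, inv_mul_eq_div, le_div_iff₀ h2m]
      linarith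
    have heq : τ j / τ k * (ρ (τ k) / ρ (τ j)) = ρ' (τ j) / ρ' (τ k) := by
      simp only [hρ'def]
      field_simp
    calc min 1 (τ j / τ k) * (ρ (τ k) / ρ (τ j))
        ≤ τ j / τ k * (ρ (τ k) / ρ (τ j)) :=
          mul_le_mul_of_nonneg_right (min_le_right _ _) (by positivity)
      _ = ρ' (τ j) / ρ' (τ k) := heq
      _ ≤ (2 ^ m)⁻¹ := hdiv
end

section
/- Let $\lambda>1$, $\bar w=(w^0,w^1)$ positive weights on a countable index set $I$, $e_k=\{n: w^0_n\le\lambda^k w^1_n<\lambda w^0_n\}$, and let $z=(z_n)$ be nonnegative with $t_k=\sum_{n\in e_k} w^0_n z_n$. Then $\sum_k t_k = \sum_n w^0_n z_n$ and $\lambda^{-1}\sum_n w^1_n z_n \le \sum_k \lambda^{-k} t_k \le \sum_n w^1_n z_n$. -/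
/-- the block sums `t k` over `e k` preserve the `w⁰`-weighted `ℓ¹` sum
exactly and the `w¹`-weighted `ℓ¹` sum up to a factor `λ`. -/
theorem stmt_7 {I : Type*} [Countable I] (lam : ℝ) (hlam : 1 < lam)
    (w0 w1 z : I → ℝ) (hw0 : ∀ n, 0 < w0 n) (hw1 : ∀ n, 0 < w1 n) (hz : ∀ n, 0 ≤ z n)
    (h0 : Summable fun n => w0 n * z n) (h1 : Summable fun n => w1 n * z n)
    (t : ℤ → ℝ)
    (ht : ∀ k, t k = ∑' n : {n : I // w0 n ≤ lam ^ k * w1 n ∧ lam ^ k * w1 n < lam * w0 n},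
      w0 n.1 * z n.1) :
    (∑' k, t k) = (∑' n, w0 n * z n) ∧
    lam⁻¹ * (∑' n, w1 n * z n) ≤ (∑' k : ℤ, lam ^ (-k) * t k) ∧
    (∑' k : ℤ, lam ^ (-k) * t k) ≤ (∑' n, w1 n * z n) := by
  classical
  have hlam0 : (0:ℝ) < lam := lt_trans one_pos hlam
  -- existence of a block for each index
  have hex : ∀ n : I, ∃ k : ℤ, w0 n ≤ lam ^ k * w1 n ∧ lam ^ k * w1 n < lam * w0 n := by
    intro n
    obtain ⟨m, hm1, hm2⟩ := exists_mem_Ioc_zpow (div_pos (hw0 n) (hw1 n)) hlam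
    refine ⟨m + 1, ?_, ?_⟩
    · exact (div_le_iff₀ (hw1 n)).mp hm2
    · have h1' : lam ^ m * w1 n < w0 n := by
        have := mul_lt_mul_of_pos_right hm1 (hw1 n)
        rwa [div_mul_cancel₀ _ (hw1 n).ne'] at this
      have : lam ^ (m+1) * w1 n = lam * (lam ^ m * w1 n) := by
        rw [zpow_add_one₀ hlam0.ne']; ring
      rw [this]
      exact mul_lt_mul_of_pos_left h1' hlam0
  -- uniqueness of the block
  have huniq : ∀ (n : I) (k j : ℤ),
      (w0 n ≤ lam ^ k * w1 n ∧ lam ^ k * w1 n < lam * w0 n) →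
      (w0 n ≤ lam ^ j * w1 n ∧ lam ^ j * w1 n < lam * w0 n) → k = j := by
    intro n k j hk hj
    have key : ∀ a b : ℤ,
        (w0 n ≤ lam ^ a * w1 n ∧ lam ^ a * w1 n < lam * w0 n) →
        (w0 n ≤ lam ^ b * w1 n ∧ lam ^ b * w1 n < lam * w0 n) → a ≤ b := by
      intro a b ha hb
      have : lam ^ a * w1 n < lam * (lam ^ b * w1 n) :=
        lt_of_lt_of_le ha.2 (by exact mul_le_mul_of_nonneg_left hb.1 hlam0.le)
      have h2 : lam ^ a * w1 n < lam ^ (b+1) * w1 n := by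
        rwa [zpow_add_one₀ hlam0.ne', show lam ^ b * lam * w1 n = lam * (lam ^ b * w1 n) by ring]
      have h3 : (lam:ℝ) ^ a < lam ^ (b+1) :=
        lt_of_mul_lt_mul_right h2 (hw1 n).le
      have := (zpow_lt_zpow_iff_right₀ hlam).mp h3
      omega
    exact le_antisymm (key k j hk hj) (key j k hj hk)
  -- equivalence between the sigma type and I
  set S := Σ k : ℤ, {n : I // w0 n ≤ lam ^ k * w1 n ∧ lam ^ k * w1 n < lam * w0 n} with hS
  have hbij : Function.Bijective (fun σ : S => σ.2.1) := by
    constructor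
    · rintro ⟨k, n, hn⟩ ⟨j, m, hm⟩ (h : n = m)
      subst h
      obtain rfl := huniq n k j hn hm
      rfl
    · intro n
      obtain ⟨k, hk⟩ := hex n
      exact ⟨⟨k, n, hk⟩, rfl⟩
  set E : S ≃ I := Equiv.ofBijective _ hbij with hE
  have hEval : ∀ σ : S, E σ = σ.2.1 := fun _ => rfl
  -- summability on the sigma type
  have hsum0 : Summable fun σ : S => w0 (E σ) * z (E σ) := E.summable_iff.mpr h0
  have hsum1 : Summable fun σ : S => w1 (E σ) * z (E σ) := E.summable_iff.mpr h1
  -- Part 1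
  have part1 : (∑' k, t k) = (∑' n, w0 n * z n) := by
    have := (Summable.tsum_sigma hsum0).symm
    calc (∑' k, t k) = ∑' (k : ℤ) (c : {n : I // w0 n ≤ lam ^ k * w1 n ∧
          lam ^ k * w1 n < lam * w0 n}), w0 c.1 * z c.1 := by
          exact tsum_congr fun k => ht k
      _ = ∑' σ : S, w0 (E σ) * z (E σ) := (Summable.tsum_sigma hsum0).symm
      _ = ∑' n, w0 n * z n := E.tsum_eq (fun n => w0 n * z n)
  refine ⟨part1, ?_, ?_⟩ <;>
  · -- common setup for parts 2 and 3
    have Fdef : ∀ σ : S, lam ^ (-σ.1) * (w0 (E σ) * z (E σ))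
        = lam ^ (-σ.1) * (w0 σ.2.1 * z σ.2.1) := fun σ => rfl
    have hub : ∀ σ : S, lam ^ (-σ.1) * (w0 (E σ) * z (E σ)) ≤ w1 (E σ) * z (E σ) := by
      rintro ⟨k, n, hn1, hn2⟩
      show lam ^ (-k) * (w0 n * z n) ≤ w1 n * z n
      have hk : lam ^ (-k) * w0 n ≤ w1 n := by
        have := mul_le_mul_of_nonneg_left hn1 (zpow_pos hlam0 (-k)).le
        rwa [show lam ^ (-k) * (lam ^ k * w1 n) = lam ^ (-k) * lam ^ k * w1 n by ring,
          ← zpow_add₀ hlam0.ne', neg_add_cancel, zpow_zero, one_mul] at this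
      calc lam ^ (-k) * (w0 n * z n) = (lam ^ (-k) * w0 n) * z n := by ring
        _ ≤ w1 n * z n := mul_le_mul_of_nonneg_right hk (hz n)
    have hlb : ∀ σ : S, lam⁻¹ * (w1 (E σ) * z (E σ))
        ≤ lam ^ (-σ.1) * (w0 (E σ) * z (E σ)) := by
      rintro ⟨k, n, hn1, hn2⟩
      show lam⁻¹ * (w1 n * z n) ≤ lam ^ (-k) * (w0 n * z n)
      have hk : lam⁻¹ * w1 n ≤ lam ^ (-k) * w0 n := by
        have := mul_le_mul_of_nonneg_left hn2.le (zpow_pos hlam0 (-k)).le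
        rw [show lam ^ (-k) * (lam ^ k * w1 n) = lam ^ (-k) * lam ^ k * w1 n by ring,
          ← zpow_add₀ hlam0.ne', neg_add_cancel, zpow_zero, one_mul,
          show lam ^ (-k) * (lam * w0 n) = lam * (lam ^ (-k) * w0 n) by ring] at this
        rw [inv_mul_le_iff₀ hlam0]
        linarith
      calc lam⁻¹ * (w1 n * z n) = (lam⁻¹ * w1 n) * z n := by ring
        _ ≤ (lam ^ (-k) * w0 n) * z n := mul_le_mul_of_nonneg_right hk (hz n)
        _ = lam ^ (-k) * (w0 n * z n) := by ring
    have hFnonneg : ∀ σ : S, 0 ≤ lam ^ (-σ.1) * (w0 (E σ) * z (E σ)) := fun σ =>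
      mul_nonneg (zpow_pos hlam0 _).le (mul_nonneg (hw0 _).le (hz _))
    have hsumF : Summable fun σ : S => lam ^ (-σ.1) * (w0 (E σ) * z (E σ)) :=
      Summable.of_nonneg_of_le hFnonneg hub hsum1
    have hFsum : (∑' k : ℤ, lam ^ (-k) * t k)
        = ∑' σ : S, lam ^ (-σ.1) * (w0 (E σ) * z (E σ)) := by
      rw [Summable.tsum_sigma hsumF]
      refine tsum_congr fun k => ?_
      rw [ht k, ← tsum_mul_left]
      exact tsum_congr fun c => rfl
    have hE1 : (∑' σ : S, w1 (E σ) * z (E σ)) = ∑' n, w1 n * z n := E.tsum_eq (fun n => w1 n * z n)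
    first
    | -- lower bound
      calc lam⁻¹ * (∑' n, w1 n * z n) = ∑' σ : S, lam⁻¹ * (w1 (E σ) * z (E σ)) := by
            rw [tsum_mul_left, hE1]
        _ ≤ ∑' σ : S, lam ^ (-σ.1) * (w0 (E σ) * z (E σ)) :=
            Summable.tsum_le_tsum hlb (hsum1.mul_left _) hsumF
        _ = ∑' k : ℤ, lam ^ (-k) * t k := hFsum.symm
    | -- upper bound
      calc (∑' k : ℤ, lam ^ (-k) * t k)
          = ∑' σ : S, lam ^ (-σ.1) * (w0 (E σ) * z (E σ)) := hFsum
        _ ≤ ∑' σ : S, w1 (E σ) * z (E σ) := Summable.tsum_le_tsum hub hsumF hsum1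
        _ = ∑' n, w1 n * z n := hE1
end

section
/- Let $\bar X=(X_0,X_1)$ and $\bar Y=(Y_0,Y_1)$ be Banach couples, $\lambda>1$, and suppose $y = Tx$ where $T$ is nuclear from $\bar X$ to $\bar Y$ with nuclear norm $<1+\varepsilon$, i.e. $Ta=\sum_n \ell_n(a)\,b_n$ with $b_n\in Y_0\cap Y_1$, $\ell_n\in(X_0+X_1)'$, and $\sum_n \max(\|\ell_n\|_{X_0'}\|b_n\|_{Y_0},\ \|\ell_n\|_{X_1'}\|b_n\|_{Y_1}) < 1+\varepsilon$. Then there exists a representation $y=\sum_{k\in\mathbb{Z}} y_k$ with $y_k\in Y_0\cap Y_1$ such that $\sum_{k} \frac{J(\lambda^k, y_k)}{K(\lambda^k, x)} \le \lambda(1+\varepsilon)$, where $J(t,y)=\max(\|y\|_{Y_0}, t\|y\|_{Y_1})$ and $K(t,x)$ is the K-functional of $x$ in $\bar X$ (assumed positive for all $t$). -/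
/-- If `N` is lower semicontinuous and all partial sums of `h` have `N`-value `≤ C`,
then the sum has `N`-value `≤ C`. -/
lemma lsc_le_of_hasSum {Y : Type*} [AddCommMonoid Y] [TopologicalSpace Y]
    {N : Y → ℝ} (hlsc : LowerSemicontinuous N) {ι : Type*} {h : ι → Y} {s : Y}
    (hs : HasSum h s) {C : ℝ} (hC : ∀ F : Finset ι, N (∑ i ∈ F, h i) ≤ C) : N s ≤ C := by
  by_contra hc
  push_neg at hc
  obtain ⟨F, hF⟩ := (hs.eventually (hlsc s C hc)).exists
  exact absurd (hC F) (not_le.mpr hF)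

/-- The K-functional of a couple of seminorms `N0`, `N1` on a common space. -/
noncomputable def Kfun {E : Type*} [NormedAddCommGroup E] [NormedSpace ℝ E]
    (N0 N1 : Seminorm ℝ E) (t : ℝ) (x : E) : ℝ :=
  sInf {r : ℝ | ∃ x0 x1 : E, x = x0 + x1 ∧ r = N0 x0 + t * N1 x1}

/-- A functional with bounds on both spaces is bounded by the K-functional. -/
lemma kfun_bound {X : Type*} [NormedAddCommGroup X] [NormedSpace ℝ X]
    (NX0 NX1 : Seminorm ℝ X) (ℓ : X →L[ℝ] ℝ) {m0 m1 t : ℝ} (ht : 0 < t)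
    (hm0nn : 0 ≤ m0)
    (hm0 : ∀ a, |ℓ a| ≤ m0 * NX0 a) (hm1 : ∀ a, |ℓ a| ≤ m1 * NX1 a) (x : X) :
    |ℓ x| ≤ max m0 (t⁻¹ * m1) * Kfun NX0 NX1 t x := by
  set c := max m0 (t⁻¹ * m1) with hc
  have hcnn : 0 ≤ c := le_trans hm0nn (le_max_left _ _)
  rcases hcnn.eq_or_lt with h0 | hcpos
  · have hm0z : m0 = 0 := le_antisymm (h0 ▸ le_max_left m0 (t⁻¹ * m1)) hm0nn
    have h1 := hm0 x
    rw [hm0z, zero_mul] at h1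
    rw [← h0, zero_mul]
    exact h1
  · have key : |ℓ x| / c ≤ Kfun NX0 NX1 t x := by
      apply le_csInf
      · exact ⟨NX0 x + t * NX1 0, x, 0, (add_zero x).symm, rfl⟩
      · rintro r ⟨x0, x1, hx, rfl⟩
        rw [div_le_iff₀ hcpos]
        have e : ℓ x = ℓ x0 + ℓ x1 := by rw [hx, map_add]
        have habs : |ℓ x| ≤ |ℓ x0| + |ℓ x1| := e ▸ abs_add_le _ _
        have h0' := hm0 x0
        have h1' := hm1 x1
        have hmc1 : m1 ≤ t * c := by
          have h : t⁻¹ * m1 ≤ c := le_max_right _ _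
          calc m1 = t * (t⁻¹ * m1) := by field_simp
            _ ≤ t * c := mul_le_mul_of_nonneg_left h ht.le
        nlinarith [mul_le_mul_of_nonneg_right (le_max_left m0 (t⁻¹ * m1) : m0 ≤ c)
            (apply_nonneg NX0 x0),
          mul_le_mul_of_nonneg_right hmc1 (apply_nonneg NX1 x1)]
    calc |ℓ x| = (|ℓ x| / c) * c := by field_simp
      _ ≤ Kfun NX0 NX1 t x * c := mul_le_mul_of_nonneg_right key hcpos.le
      _ = c * Kfun NX0 NX1 t x := mul_comm _ _


/-- The central J–K estimate for a single term of the nuclear representation. -/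
lemma jk_est {X Y : Type*} [NormedAddCommGroup X] [NormedSpace ℝ X]
    [NormedAddCommGroup Y] [NormedSpace ℝ Y]
    (NX0 NX1 : Seminorm ℝ X) (NY0 NY1 : Seminorm ℝ Y) {lam : ℝ} (hlam : 1 < lam)
    (ℓn : X →L[ℝ] ℝ) (bn : Y) {m0 m1 : ℝ} (hm0nn : 0 ≤ m0) (hm1nn : 0 ≤ m1)
    (hm0 : ∀ a, |ℓn a| ≤ m0 * NX0 a) (hm1 : ∀ a, |ℓn a| ≤ m1 * NX1 a)
    (x : X) (k : ℤ) (hKpos : 0 < Kfun NX0 NX1 (lam ^ k) x)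
    (hA : (NY0 bn : ℝ) ≤ lam ^ k * NY1 bn) (hB : lam ^ k * (NY1 bn : ℝ) ≤ lam * NY0 bn) :
    max (NY0 (ℓn x • bn)) (lam ^ k * NY1 (ℓn x • bn))
      ≤ lam * Kfun NX0 NX1 (lam ^ k) x * max (m0 * NY0 bn) (m1 * NY1 bn) := by
  have hlam0 : (0 : ℝ) < lam := lt_trans one_pos hlam
  have ht : (0 : ℝ) < lam ^ k := zpow_pos hlam0 k
  have hgn : (0 : ℝ) ≤ max (m0 * NY0 bn) (m1 * NY1 bn) :=
    le_trans (mul_nonneg hm0nn (apply_nonneg _ _)) (le_max_left _ _)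
  have hg1 : m0 * (NY0 bn : ℝ) ≤ max (m0 * NY0 bn) (m1 * NY1 bn) := le_max_left _ _
  have hg2 : m1 * (NY1 bn : ℝ) ≤ max (m0 * NY0 bn) (m1 * NY1 bn) := le_max_right _ _
  have hM1v : (lam ^ k)⁻¹ * m1 * (lam ^ k * NY1 bn) = m1 * NY1 bn := by
    rw [show (lam ^ k)⁻¹ * m1 * (lam ^ k * NY1 bn)
        = ((lam ^ k)⁻¹ * lam ^ k) * (m1 * NY1 bn) from by ring,
      inv_mul_cancel₀ ht.ne', one_mul]
  have hℓ : |ℓn x| ≤ max m0 ((lam ^ k)⁻¹ * m1) * Kfun NX0 NX1 (lam ^ k) x :=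
    kfun_bound NX0 NX1 ℓn ht hm0nn hm0 hm1 x
  have hcnn : 0 ≤ max m0 ((lam ^ k)⁻¹ * m1) := le_trans hm0nn (le_max_left _ _)
  have hprod : max m0 ((lam ^ k)⁻¹ * m1) * max (NY0 bn) (lam ^ k * NY1 bn)
      ≤ lam * max (m0 * NY0 bn) (m1 * NY1 bn) := by
    rw [mul_max_of_nonneg _ _ hcnn]
    apply max_le
    · rw [max_mul_of_nonneg _ _ (apply_nonneg NY0 bn)]
      apply max_le
      · exact le_trans hg1 (le_mul_of_one_le_left hgn hlam.le)
      · calc (lam ^ k)⁻¹ * m1 * NY0 bn ≤ (lam ^ k)⁻¹ * m1 * (lam ^ k * NY1 bn) :=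
              mul_le_mul_of_nonneg_left hA (mul_nonneg (inv_nonneg.mpr ht.le) hm1nn)
          _ = m1 * NY1 bn := hM1v
          _ ≤ max (m0 * NY0 bn) (m1 * NY1 bn) := hg2
          _ ≤ lam * max (m0 * NY0 bn) (m1 * NY1 bn) := le_mul_of_one_le_left hgn hlam.le
    · rw [max_mul_of_nonneg _ _ (mul_nonneg ht.le (apply_nonneg NY1 bn))]
      apply max_le
      · calc m0 * (lam ^ k * NY1 bn) ≤ m0 * (lam * NY0 bn) :=
              mul_le_mul_of_nonneg_left hB hm0nn
          _ = lam * (m0 * NY0 bn) := by ring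
          _ ≤ lam * max (m0 * NY0 bn) (m1 * NY1 bn) :=
              mul_le_mul_of_nonneg_left hg1 hlam0.le
      · calc (lam ^ k)⁻¹ * m1 * (lam ^ k * NY1 bn) = m1 * NY1 bn := hM1v
          _ ≤ max (m0 * NY0 bn) (m1 * NY1 bn) := hg2
          _ ≤ lam * max (m0 * NY0 bn) (m1 * NY1 bn) := le_mul_of_one_le_left hgn hlam.le
  have e0 : (NY0 (ℓn x • bn) : ℝ) = |ℓn x| * NY0 bn := by
    rw [map_smul_eq_mul, Real.norm_eq_abs]
  have e1 : (NY1 (ℓn x • bn) : ℝ) = |ℓn x| * NY1 bn := by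
    rw [map_smul_eq_mul, Real.norm_eq_abs]
  rw [e0, e1]
  have emax : max (|ℓn x| * NY0 bn) (lam ^ k * (|ℓn x| * NY1 bn))
      = |ℓn x| * max (NY0 bn) (lam ^ k * NY1 bn) := by
    rw [mul_max_of_nonneg _ _ (abs_nonneg (ℓn x))]
    ring_nf
  rw [emax]
  calc |ℓn x| * max (NY0 bn) (lam ^ k * NY1 bn)
      ≤ (max m0 ((lam ^ k)⁻¹ * m1) * Kfun NX0 NX1 (lam ^ k) x)
          * max (NY0 bn) (lam ^ k * NY1 bn) :=
        mul_le_mul_of_nonneg_right hℓ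
          (le_trans (apply_nonneg NY0 bn) (le_max_left _ _))
    _ = (max m0 ((lam ^ k)⁻¹ * m1) * max (NY0 bn) (lam ^ k * NY1 bn))
          * Kfun NX0 NX1 (lam ^ k) x := by ring
    _ ≤ (lam * max (m0 * NY0 bn) (m1 * NY1 bn)) * Kfun NX0 NX1 (lam ^ k) x :=
        mul_le_mul_of_nonneg_right hprod hKpos.le
    _ = lam * Kfun NX0 NX1 (lam ^ k) x * max (m0 * NY0 bn) (m1 * NY1 bn) := by ring

/-- the image `y = Tx` of `x` under a nuclear operator of nuclear norm
`< 1+ε` has a representation `y = ∑ₖ yₖ` with `∑ₖ J(λᵏ,yₖ)/K(λᵏ,x) ≤ λ(1+ε)`. -/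
theorem stmt_12 {X Y : Type*} [NormedAddCommGroup X] [NormedSpace ℝ X]
    [NormedAddCommGroup Y] [NormedSpace ℝ Y] [CompleteSpace Y]
    (NX0 NX1 : Seminorm ℝ X) (NY0 NY1 : Seminorm ℝ Y)
    (hlsc0 : LowerSemicontinuous fun v : Y => (NY0 v : ℝ))
    (hlsc1 : LowerSemicontinuous fun v : Y => (NY1 v : ℝ))
    (hdom0 : ∀ v : Y, ‖v‖ ≤ NY0 v) (hdom1 : ∀ v : Y, ‖v‖ ≤ NY1 v)
    (lam ε : ℝ) (hlam : 1 < lam) (hε : 0 < ε)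
    (ℓ : ℕ → X →L[ℝ] ℝ) (b : ℕ → Y) (M0 M1 : ℕ → ℝ)
    (hM0nn : ∀ n, 0 ≤ M0 n) (hM1nn : ∀ n, 0 ≤ M1 n)
    (hM0 : ∀ n a, |ℓ n a| ≤ M0 n * NX0 a) (hM1 : ∀ n a, |ℓ n a| ≤ M1 n * NX1 a)
    (hnucS : Summable fun n => max (M0 n * NY0 (b n)) (M1 n * NY1 (b n)))
    (hnuc : (∑' n, max (M0 n * NY0 (b n)) (M1 n * NY1 (b n))) < 1 + ε)
    (x : X) (y : Y) (hy : HasSum (fun n => ℓ n x • b n) y)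
    (hK : ∀ k : ℤ, 0 < Kfun NX0 NX1 (lam ^ k) x) :
    ∃ yk : ℤ → Y, HasSum yk y ∧
      Summable (fun k : ℤ =>
        max (NY0 (yk k)) (lam ^ k * NY1 (yk k)) / Kfun NX0 NX1 (lam ^ k) x) ∧
      (∑' k : ℤ, max (NY0 (yk k)) (lam ^ k * NY1 (yk k)) / Kfun NX0 NX1 (lam ^ k) x)
        ≤ lam * (1 + ε) := by
  classical
  have hlam0 : (0 : ℝ) < lam := lt_trans one_pos hlam
  have hlog : 0 < Real.log lam := Real.log_pos hlam
  set g : ℕ → ℝ := fun n => max (M0 n * NY0 (b n)) (M1 n * NY1 (b n)) with hgdef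
  set f : ℕ → Y := fun n => ℓ n x • b n with hfdef
  set κ : ℕ → ℤ := fun n =>
    if b n = 0 then 0 else ⌈Real.log (NY0 (b n) / NY1 (b n)) / Real.log lam⌉ with hκdef
  have hgnn : ∀ n, 0 ≤ g n :=
    fun n => le_trans (mul_nonneg (hM0nn n) (apply_nonneg _ _)) (le_max_left _ _)
  have hfs : Summable f := hy.summable
  set yk : ℤ → Y := fun k => ∑' n : κ ⁻¹' {k}, f n with hykdef
  set S : ℤ → ℝ := fun k => ∑' n : κ ⁻¹' {k}, g n with hSdef
  have hSsum : HasSum S (∑' n, g n) := hnucS.hasSum.tsum_fiberwise κ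
  have hSnn : ∀ k, 0 ≤ S k := fun k => tsum_nonneg fun i => hgnn i
  -- the key pointwise estimate
  have key : ∀ (k : ℤ) (n : ℕ), κ n = k →
      max (NY0 (f n)) (lam ^ k * NY1 (f n)) ≤ lam * Kfun NX0 NX1 (lam ^ k) x * g n := by
    intro k n hn
    have hAB : (NY0 (b n) : ℝ) ≤ lam ^ k * NY1 (b n) ∧
        lam ^ k * (NY1 (b n) : ℝ) ≤ lam * NY0 (b n) := by
      by_cases hb : b n = 0
      · simp [hb]
      · have hb0 : 0 < NY0 (b n) := lt_of_lt_of_le (norm_pos_iff.mpr hb) (hdom0 _)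
        have hb1 : 0 < NY1 (b n) := lt_of_lt_of_le (norm_pos_iff.mpr hb) (hdom1 _)
        set L := Real.log (NY0 (b n) / NY1 (b n)) / Real.log lam with hL
        have hkL : k = ⌈L⌉ := by rw [← hn]; simp [hκdef, hb, hL]
        have hLpow : lam ^ L = NY0 (b n) / NY1 (b n) := by
          rw [Real.rpow_def_of_pos hlam0, hL, mul_comm, div_mul_cancel₀ _ (ne_of_gt hlog),
            Real.exp_log (div_pos hb0 hb1)]
        have h1 : NY0 (b n) / NY1 (b n) ≤ lam ^ k := by
          have h := Real.rpow_le_rpow_of_exponent_le hlam.le (Int.le_ceil L)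
          rw [hLpow, Real.rpow_intCast] at h
          rw [hkL]; exact h
        have h2 : lam ^ k ≤ lam * (NY0 (b n) / NY1 (b n)) := by
          have hcl : ((⌈L⌉ : ℤ) : ℝ) ≤ L + 1 := (Int.ceil_lt_add_one L).le
          have h := Real.rpow_le_rpow_of_exponent_le hlam.le hcl
          rw [Real.rpow_intCast, Real.rpow_add hlam0, hLpow, Real.rpow_one] at h
          rw [hkL]; linarith
        constructor
        · rw [div_le_iff₀ hb1] at h1; exact h1
        · have h := mul_le_mul_of_nonneg_right h2 hb1.le
          have he : lam * (NY0 (b n) / NY1 (b n)) * NY1 (b n) = lam * NY0 (b n) := by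
            field_simp
          rw [he] at h
          exact le_trans (mul_le_mul_of_nonneg_right (le_of_eq rfl) hb1.le) h
    exact jk_est NX0 NX1 NY0 NY1 hlam (ℓ n) (b n) (hM0nn n) (hM1nn n)
      (hM0 n) (hM1 n) x k (hK k) hAB.1 hAB.2
  -- fiberwise sums
  have hfib : ∀ k : ℤ, HasSum (fun n : ↥(κ ⁻¹' {k}) => f n) (yk k) :=
    fun k => (hfs.subtype _).hasSum
  have hgfib : ∀ k : ℤ, Summable (fun n : ↥(κ ⁻¹' {k}) => g n) :=
    fun k => hnucS.subtype _
  have hbound : ∀ k : ℤ, max (NY0 (yk k)) (lam ^ k * NY1 (yk k))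
      ≤ lam * Kfun NX0 NX1 (lam ^ k) x * S k := by
    intro k
    have hKnn : 0 ≤ lam * Kfun NX0 NX1 (lam ^ k) x := mul_nonneg hlam0.le (hK k).le
    have hCk : ∀ F : Finset ↥(κ ⁻¹' {k}),
        ∑ i ∈ F, lam * Kfun NX0 NX1 (lam ^ k) x * g i
          ≤ lam * Kfun NX0 NX1 (lam ^ k) x * S k := by
      intro F
      rw [← Finset.mul_sum]
      exact mul_le_mul_of_nonneg_left
        (Summable.sum_le_tsum F (fun i _ => hgnn i) (hgfib k)) hKnn
    apply max_le
    · apply lsc_le_of_hasSum hlsc0 (hfib k)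
      intro F
      calc (NY0 (∑ i ∈ F, f i) : ℝ) ≤ ∑ i ∈ F, (NY0 (f i) : ℝ) :=
            Finset.le_sum_of_subadditive _ (map_zero NY0).le (map_add_le_add NY0) F _
        _ ≤ ∑ i ∈ F, lam * Kfun NX0 NX1 (lam ^ k) x * g i :=
            Finset.sum_le_sum fun i _ =>
              le_trans (le_max_left _ _) (key k i i.2)
        _ ≤ _ := hCk F
    · have hlsc1' : LowerSemicontinuous fun v : Y => lam ^ k * (NY1 v : ℝ) :=
        (continuous_const.mul continuous_id).comp_lowerSemicontinuous hlsc1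
          (fun a b hab => mul_le_mul_of_nonneg_left hab (zpow_pos hlam0 k).le)
      apply lsc_le_of_hasSum hlsc1' (hfib k)
      intro F
      calc lam ^ k * (NY1 (∑ i ∈ F, f i) : ℝ) ≤ lam ^ k * ∑ i ∈ F, (NY1 (f i) : ℝ) :=
            mul_le_mul_of_nonneg_left
              (Finset.le_sum_of_subadditive _ (map_zero NY1).le (map_add_le_add NY1) F _)
              (zpow_pos hlam0 k).le
        _ = ∑ i ∈ F, lam ^ k * (NY1 (f i) : ℝ) := Finset.mul_sum _ _ _
        _ ≤ ∑ i ∈ F, lam * Kfun NX0 NX1 (lam ^ k) x * g i :=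
            Finset.sum_le_sum fun i _ =>
              le_trans (le_max_right _ _) (key k i i.2)
        _ ≤ _ := hCk F
  have hratio : ∀ k : ℤ,
      max (NY0 (yk k)) (lam ^ k * NY1 (yk k)) / Kfun NX0 NX1 (lam ^ k) x ≤ lam * S k := by
    intro k
    rw [div_le_iff₀ (hK k)]
    exact le_trans (hbound k) (le_of_eq (by ring))
  have hrnn : ∀ k : ℤ,
      0 ≤ max (NY0 (yk k)) (lam ^ k * NY1 (yk k)) / Kfun NX0 NX1 (lam ^ k) x :=
    fun k => div_nonneg (le_trans (apply_nonneg NY0 _) (le_max_left _ _)) (hK k).le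
  have hSum2 : Summable fun k : ℤ => lam * S k := hSsum.summable.mul_left lam
  have hsr : Summable (fun k : ℤ =>
      max (NY0 (yk k)) (lam ^ k * NY1 (yk k)) / Kfun NX0 NX1 (lam ^ k) x) :=
    Summable.of_nonneg_of_le hrnn hratio hSum2
  refine ⟨yk, hy.tsum_fiberwise κ, hsr, ?_⟩
  calc (∑' k : ℤ, max (NY0 (yk k)) (lam ^ k * NY1 (yk k)) / Kfun NX0 NX1 (lam ^ k) x)
      ≤ ∑' k : ℤ, lam * S k := Summable.tsum_le_tsum hratio hsr hSum2
    _ = lam * ∑' k : ℤ, S k := tsum_mul_left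
    _ = lam * ∑' n, g n := by rw [hSsum.tsum_eq]
    _ ≤ lam * (1 + ε) := mul_le_mul_of_nonneg_left hnuc.le hlam0.le
end

section
/- Let $\bar X=(X_0,X_1)$, $\bar Y=(Y_0,Y_1)$ be Banach couples, $\lambda>1$, and $x\in X_0+X_1$ with $K(\lambda^k,x)>0$ for all $k\in\mathbb{Z}$. Suppose $y\in Y_0+Y_1$ has a representation $y=\sum_{k\in\mathbb{Z}} y_k$ ($y_k\in Y_0\cap Y_1$, convergence in $Y_0+Y_1$) with $\sum_k \frac{J(\lambda^k,y_k)}{K(\lambda^k,x)} < 1+\varepsilon$. Then there exists a linear operator $T: X_0+X_1 \to Y_0+Y_1$ of the form $Ta=\sum_k \ell_k(a)\,y_k$ with continuous linear functionals $\ell_k$ on $X_0+X_1$, such that $Tx=y$ and $\sum_k \max_{i=0,1} \|\ell_k\|_{X_i'}\,\|y_k\|_{Y_i} < 1+\varepsilon$ (so $T$ is nuclear from $\bar X$ to $\bar Y$ with nuclear norm $<1+\varepsilon$). -/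
section KfunLemmas

variable {E : Type*} [NormedAddCommGroup E] [NormedSpace ℝ E]
  (N0 N1 : Seminorm ℝ E) {t : ℝ}

lemma Kfun_set_nonempty (t : ℝ) (a : E) :
    {r : ℝ | ∃ x0 x1 : E, a = x0 + x1 ∧ r = N0 x0 + t * N1 x1}.Nonempty :=
  ⟨N0 a + t * N1 0, a, 0, by simp, rfl⟩

lemma Kfun_set_bddBelow (ht : 0 ≤ t) (a : E) :
    BddBelow {r : ℝ | ∃ x0 x1 : E, a = x0 + x1 ∧ r = N0 x0 + t * N1 x1} := by
  refine ⟨0, fun r hr => ?_⟩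
  obtain ⟨x0, x1, _, rfl⟩ := hr
  have := apply_nonneg N0 x0
  have := apply_nonneg N1 x1
  nlinarith

lemma Kfun_nonneg (ht : 0 ≤ t) (a : E) : 0 ≤ Kfun N0 N1 t a := by
  refine le_csInf (Kfun_set_nonempty N0 N1 t a) ?_
  rintro r ⟨x0, x1, _, rfl⟩
  have := apply_nonneg N0 x0
  have := apply_nonneg N1 x1
  nlinarith

lemma Kfun_le_decomp (ht : 0 ≤ t) {a x0 x1 : E} (h : a = x0 + x1) :
    Kfun N0 N1 t a ≤ N0 x0 + t * N1 x1 :=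
  csInf_le (Kfun_set_bddBelow N0 N1 ht a) ⟨x0, x1, h, rfl⟩

lemma Kfun_le_N0 (ht : 0 ≤ t) (a : E) : Kfun N0 N1 t a ≤ N0 a := by
  have := Kfun_le_decomp N0 N1 ht (a := a) (x0 := a) (x1 := 0) (by simp)
  simpa using this

lemma Kfun_le_N1 (ht : 0 ≤ t) (a : E) : Kfun N0 N1 t a ≤ t * N1 a := by
  have := Kfun_le_decomp N0 N1 ht (a := a) (x0 := 0) (x1 := a) (by simp)
  simpa using this

lemma Kfun_add (ht : 0 ≤ t) (a b : E) :
    Kfun N0 N1 t (a + b) ≤ Kfun N0 N1 t a + Kfun N0 N1 t b := by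
  rw [← sub_le_iff_le_add']
  rw [show Kfun N0 N1 t b = sInf _ from rfl]
  refine le_csInf (Kfun_set_nonempty N0 N1 t b) ?_
  rintro rb ⟨b0, b1, hb, rfl⟩
  rw [sub_le_iff_le_add', ← sub_le_iff_le_add]
  rw [show Kfun N0 N1 t a = sInf _ from rfl]
  refine le_csInf (Kfun_set_nonempty N0 N1 t a) ?_
  rintro ra ⟨a0, a1, ha, rfl⟩
  rw [sub_le_iff_le_add]
  calc Kfun N0 N1 t (a + b) ≤ N0 (a0 + b0) + t * N1 (a1 + b1) :=
        Kfun_le_decomp N0 N1 ht (by rw [ha, hb]; abel)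
    _ ≤ (N0 a0 + t * N1 a1) + (N0 b0 + t * N1 b1) := by
        have h0 := map_add_le_add N0 a0 b0
        have h1 := map_add_le_add N1 a1 b1
        nlinarith [mul_le_mul_of_nonneg_left h1 ht]

lemma Kfun_neg (t : ℝ) (a : E) : Kfun N0 N1 t (-a) = Kfun N0 N1 t a := by
  unfold Kfun
  congr 1
  ext r
  constructor
  · rintro ⟨x0, x1, h, rfl⟩
    exact ⟨-x0, -x1, by rw [← neg_add, ← h, neg_neg], by simp⟩
  · rintro ⟨x0, x1, h, rfl⟩
    exact ⟨-x0, -x1, by rw [← neg_add, ← h], by simp⟩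

lemma Kfun_smul (t : ℝ) {c : ℝ} (hc : 0 < c) (a : E) :
    Kfun N0 N1 t (c • a) = c * Kfun N0 N1 t a := by
  unfold Kfun
  rw [← smul_eq_mul, ← Real.sInf_smul_of_nonneg hc.le]
  congr 1
  ext r
  constructor
  · rintro ⟨x0, x1, h, rfl⟩
    refine ⟨N0 (c⁻¹ • x0) + t * N1 (c⁻¹ • x1), ⟨c⁻¹ • x0, c⁻¹ • x1, ?_, rfl⟩, ?_⟩
    · rw [← smul_add, ← h, inv_smul_smul₀ hc.ne']
    · simp only [map_smul_eq_mul, smul_eq_mul, Real.norm_eq_abs]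
      rw [abs_of_pos (inv_pos.2 hc)]
      field_simp
  · rintro ⟨s, ⟨x0, x1, h, rfl⟩, rfl⟩
    refine ⟨c • x0, c • x1, by rw [h, smul_add], ?_⟩
    simp only [map_smul_eq_mul, smul_eq_mul, Real.norm_eq_abs, abs_of_pos hc]
    ring

end KfunLemmas

/-- from a representation `y = ∑ₖ yₖ` with `∑ J(λᵏ,yₖ)/K(λᵏ,x) < 1+ε` one
builds a nuclear operator `T a = ∑ₖ ℓₖ(a)·yₖ` with `Tx = y` and nuclear norm `< 1+ε`. -/
theorem stmt_13 {X Y : Type*} [NormedAddCommGroup X] [NormedSpace ℝ X]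
    [NormedAddCommGroup Y] [NormedSpace ℝ Y] [CompleteSpace Y]
    (NX0 NX1 : Seminorm ℝ X) (NY0 NY1 : Seminorm ℝ Y)
    (hdom0 : ∀ v : Y, ‖v‖ ≤ NY0 v) (hdom1 : ∀ v : Y, ‖v‖ ≤ NY1 v)
    (lam ε : ℝ) (hlam : 1 < lam) (hε : 0 < ε)
    (x : X) (hK : ∀ k : ℤ, 0 < Kfun NX0 NX1 (lam ^ k) x)
    (y : Y) (yk : ℤ → Y) (hy : HasSum yk y)
    (hrepS : Summable fun k : ℤ =>
      max (NY0 (yk k)) (lam ^ k * NY1 (yk k)) / Kfun NX0 NX1 (lam ^ k) x)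
    (hrep : (∑' k : ℤ, max (NY0 (yk k)) (lam ^ k * NY1 (yk k)) / Kfun NX0 NX1 (lam ^ k) x)
      < 1 + ε) :
    ∃ (ℓ : ℤ → X →ₗ[ℝ] ℝ) (M0 M1 : ℤ → ℝ),
      (∀ k, ℓ k x = 1) ∧
      (∀ k a, |ℓ k a| ≤ Kfun NX0 NX1 (lam ^ k) a / Kfun NX0 NX1 (lam ^ k) x) ∧
      (∀ k a, |ℓ k a| ≤ M0 k * NX0 a) ∧ (∀ k a, |ℓ k a| ≤ M1 k * NX1 a) ∧
      (∀ a : X, Summable fun k : ℤ => ℓ k a • yk k) ∧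
      HasSum (fun k : ℤ => ℓ k x • yk k) y ∧
      Summable (fun k : ℤ => max (M0 k * NY0 (yk k)) (M1 k * NY1 (yk k))) ∧
      (∑' k : ℤ, max (M0 k * NY0 (yk k)) (M1 k * NY1 (yk k))) < 1 + ε := by
  have hlam0 : (0:ℝ) < lam := lt_trans one_pos hlam
  have ht : ∀ k : ℤ, (0:ℝ) < lam ^ k := fun k => zpow_pos hlam0 k
  set Kk : ℤ → ℝ := fun k => Kfun NX0 NX1 (lam ^ k) x with hKk
  -- x ≠ 0
  have hx0 : x ≠ 0 := by
    intro h
    have h1 := Kfun_le_N0 NX0 NX1 (ht 0).le x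
    rw [h] at h1
    simp at h1
    exact absurd (hK 0) (by rw [h]; exact not_lt.2 h1)
  -- Construct, for each k, a linear functional gₖ with gₖ x = Kk k and gₖ a ≤ Kfun.
  have hg : ∀ k : ℤ, ∃ g : X →ₗ[ℝ] ℝ, g x = Kk k ∧
      ∀ a, g a ≤ Kfun NX0 NX1 (lam ^ k) a := by
    intro k
    set N : X → ℝ := fun a => Kfun NX0 NX1 (lam ^ k) a with hN
    have H : ∀ c : ℝ, c • x = 0 → c • Kk k = 0 := by
      intro c hc
      rcases smul_eq_zero.1 hc with h | h
      · rw [h, zero_smul]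
      · exact absurd h hx0
    set f : X →ₗ.[ℝ] ℝ := LinearPMap.mkSpanSingleton' x (Kk k) H with hf
    have hfle : ∀ z : f.domain, f z ≤ N z := by
      rintro ⟨z, hz⟩
      have hz' : z ∈ Submodule.span ℝ {x} := hz
      obtain ⟨c, rfl⟩ := Submodule.mem_span_singleton.1 hz'
      rw [LinearPMap.mkSpanSingleton'_apply]
      simp only [smul_eq_mul]
      have hKcx : Kfun NX0 NX1 (lam ^ k) (c • x) = |c| * Kk k := by
        rcases lt_trichotomy c 0 with h | h | h
        · have hcx : c • x = -((-c) • x) := by simp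
          rw [hcx, Kfun_neg, Kfun_smul NX0 NX1 _ (by linarith : (0:ℝ) < -c) x,
            abs_of_neg h]
        · rw [h, zero_smul, abs_zero, zero_mul]
          have h1 := Kfun_le_N0 NX0 NX1 (ht k).le (0 : X)
          have h2 := Kfun_nonneg NX0 NX1 (ht k).le (0 : X)
          simp only [map_zero] at h1
          linarith
        · rw [Kfun_smul NX0 NX1 _ h x, abs_of_pos h]
      show c * Kk k ≤ Kfun NX0 NX1 (lam ^ k) (c • x)
      rw [hKcx]
      have := (hK k)
      nlinarith [le_abs_self c]
    obtain ⟨g, hg1, hg2⟩ := exists_extension_of_le_sublinear f N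
      (fun c hc a => Kfun_smul NX0 NX1 _ hc a)
      (fun a b => Kfun_add NX0 NX1 (ht k).le a b) hfle
    refine ⟨g, ?_, hg2⟩
    have hxmem : x ∈ f.domain := by
      show x ∈ Submodule.span ℝ {x}
      exact Submodule.mem_span_singleton_self x
    have := hg1 ⟨x, hxmem⟩
    rwa [LinearPMap.mkSpanSingleton'_apply_self] at this
  choose g hgx hgle using hg
  -- abs bound
  have hgabs : ∀ k a, |g k a| ≤ Kfun NX0 NX1 (lam ^ k) a := by
    intro k a
    rw [abs_le]
    refine ⟨?_, hgle k a⟩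
    have := hgle k (-a)
    rw [map_neg, Kfun_neg] at this
    linarith
  refine ⟨fun k => (Kk k)⁻¹ • g k, fun k => (Kk k)⁻¹, fun k => lam ^ k / Kk k,
    ?_, ?_, ?_, ?_, ?_, ?_, ?_, ?_⟩
  · intro k
    simp [LinearMap.smul_apply, hgx k, inv_mul_cancel₀ (show Kk k ≠ 0 from (hK k).ne')]
  · intro k a
    simp only [LinearMap.smul_apply, smul_eq_mul, abs_mul, abs_inv,
      abs_of_pos (show 0 < Kk k from hK k)]
    rw [div_eq_inv_mul]
    exact mul_le_mul_of_nonneg_left (hgabs k a) (inv_nonneg.2 (hK k).le)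
  · intro k a
    calc |((Kk k)⁻¹ • g k) a| ≤ Kfun NX0 NX1 (lam ^ k) a / Kk k := by
          simp only [LinearMap.smul_apply, smul_eq_mul, abs_mul, abs_inv,
            abs_of_pos (show 0 < Kk k from hK k)]
          rw [div_eq_inv_mul, mul_comm ((Kk k)⁻¹) (|g k a|), mul_comm]
          exact mul_le_mul_of_nonneg_left (hgabs k a) (inv_nonneg.2 (hK k).le)
      _ ≤ (Kk k)⁻¹ * NX0 a := by
          rw [div_eq_inv_mul]
          exact mul_le_mul_of_nonneg_left (Kfun_le_N0 NX0 NX1 (ht k).le a)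
            (inv_nonneg.2 (hK k).le)
  · intro k a
    calc |((Kk k)⁻¹ • g k) a| ≤ Kfun NX0 NX1 (lam ^ k) a / Kk k := by
          simp only [LinearMap.smul_apply, smul_eq_mul, abs_mul, abs_inv,
            abs_of_pos (show 0 < Kk k from hK k)]
          rw [div_eq_inv_mul, mul_comm ((Kk k)⁻¹) (|g k a|), mul_comm]
          exact mul_le_mul_of_nonneg_left (hgabs k a) (inv_nonneg.2 (hK k).le)
      _ ≤ lam ^ k / Kk k * NX1 a := by
          rw [div_eq_inv_mul, div_eq_inv_mul, mul_assoc]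
          exact mul_le_mul_of_nonneg_left (Kfun_le_N1 NX0 NX1 (ht k).le a)
            (inv_nonneg.2 (hK k).le)
  · -- summability of a ↦ ∑ ℓ k a • yk k
    intro a
    refine Summable.of_norm ?_
    refine Summable.of_nonneg_of_le (fun k => norm_nonneg _)
      (fun k => ?_) (hrepS.mul_left (NX0 a))
    rw [norm_smul, Real.norm_eq_abs]
    have h1 : |((Kk k)⁻¹ • g k) a| ≤ (Kk k)⁻¹ * NX0 a := by
      simp only [LinearMap.smul_apply, smul_eq_mul, abs_mul, abs_inv, abs_of_pos (show 0 < Kk k from hK k)]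
      exact mul_le_mul_of_nonneg_left
        ((hgabs k a).trans (Kfun_le_N0 NX0 NX1 (ht k).le a)) (inv_nonneg.2 (hK k).le)
    have h2 : ‖yk k‖ ≤ max (NY0 (yk k)) (lam ^ k * NY1 (yk k)) :=
      (hdom0 (yk k)).trans (le_max_left _ _)
    calc |((Kk k)⁻¹ • g k) a| * ‖yk k‖
        ≤ ((Kk k)⁻¹ * NX0 a) * max (NY0 (yk k)) (lam ^ k * NY1 (yk k)) := by
          exact mul_le_mul h1 h2 (norm_nonneg _)
            (mul_nonneg (inv_nonneg.2 (hK k).le) (apply_nonneg _ _))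
      _ = NX0 a * (max (NY0 (yk k)) (lam ^ k * NY1 (yk k)) / Kk k) := by
          rw [div_eq_inv_mul]
          ring
  · -- HasSum with ℓ k x = 1
    have h1 : ∀ k, ((Kk k)⁻¹ • g k) x = 1 := fun k => by
      simp [LinearMap.smul_apply, hgx k, inv_mul_cancel₀ (show Kk k ≠ 0 from (hK k).ne')]
    simpa [h1, one_smul] using hy
  · -- Summability of the max
    have heq : (fun k : ℤ => max ((Kk k)⁻¹ * NY0 (yk k)) (lam ^ k / Kk k * NY1 (yk k)))
        = fun k : ℤ => max (NY0 (yk k)) (lam ^ k * NY1 (yk k)) / Kk k := by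
      funext k
      rw [div_mul_eq_mul_div, ← max_div_div_right (hK k).le]
      congr 1
      field_simp
      rfl
    rw [heq]
    exact hrepS
  · have heq : (fun k : ℤ => max ((Kk k)⁻¹ * NY0 (yk k)) (lam ^ k / Kk k * NY1 (yk k)))
        = fun k : ℤ => max (NY0 (yk k)) (lam ^ k * NY1 (yk k)) / Kk k := by
      funext k
      rw [div_mul_eq_mul_div, ← max_div_div_right (hK k).le]
      congr 1
      field_simp
      rfl
    calc (∑' k : ℤ, max ((Kk k)⁻¹ * NY0 (yk k)) (lam ^ k / Kk k * NY1 (yk k)))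
        = ∑' k : ℤ, max (NY0 (yk k)) (lam ^ k * NY1 (yk k)) / Kk k := by rw [heq]
      _ < 1 + ε := hrep
end
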